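/- Assume every leaf of T is a variable node (equivalently, every check node of T has at least one child variable node). Let p ∈ P and let T_p denote the subtree of T consisting of p together with all of its descendants, regarded as a rooted bipartite tree with root p, variable nodes P ∩ T_p and check nodes Q ∩ T_p. Then every minimal deviation x' of T_p extends to a minimal deviation of T: there exists a minimal deviation x of T such that x agrees with x' on every variable node of T_p. -/
import Mathlib


open SimpleGraph Finset

/-- In the tree `T` rooted at `n`, `v` is a child of `u`. -/
def IsChild {V : Type} (T : SimpleGraph V) (n u v : V) : Prop :=
  T.Adj u v ∧ T.dist v n = T.dist u n + 1

/-- The descendants of `p` in the tree `T` rooted at `n`: the vertices whose path to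
the root `n` passes through `p` (this includes `p` itself).  In a tree this is
equivalent to the distance condition below. -/
def Descendants {V : Type} (T : SimpleGraph V) (n p : V) : Set V :=
  {v | T.dist v n = T.dist v p + T.dist p n}

/-- A codeword of the subtree of `T` with vertex set `S` and variable nodes `P ∩ S`:
a map vanishing outside `P ∩ S` such that, at every check node of `S`, the sum of the
values of its variable neighbors in `S` is `0` in `ZMod 2` (values of neighbors
outside `S` being `0`, the sum may be taken over all neighbors). -/
def IsCodewordOn {V : Type} (T : SimpleGraph V) [Fintype V] [DecidableRel T.Adj]
    (P S : Set V) (x : V → ZMod 2) : Prop :=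
  (∀ v, ¬(v ∈ P ∧ v ∈ S) → x v = 0) ∧
  ∀ q ∈ S, q ∉ P → ∑ u ∈ T.neighborFinset q, x u = 0

/-- `x` covers `y` on the variable nodes of `S`. -/
def CoversOn {V : Type} (P S : Set V) (x y : V → ZMod 2) : Prop :=
  ∀ v, v ∈ P → v ∈ S → y v = 1 → x v = 1

/-- A minimal deviation of the subtree with vertex set `S` rooted at `r`: a codeword
`x` with `x r = 1` such that the only nonzero codeword covered by `x` is `x` itself. -/
def IsMinimalDeviationOn {V : Type} (T : SimpleGraph V) [Fintype V]
    [DecidableRel T.Adj] (P S : Set V) (r : V) (x : V → ZMod 2) : Prop :=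
  IsCodewordOn T P S x ∧ x r = 1 ∧
  ∀ y, IsCodewordOn T P S y → CoversOn P S x y → y ≠ 0 → y = x


namespace MDAux

variable {V : Type}

lemma zmod2_cases (a : ZMod 2) : a = 0 ∨ a = 1 := by revert a; decide

lemma zmod2_add_eq (a b : ZMod 2) (h : a + b = 0) (hb : b = 1) : a = 1 := by
  subst hb
  rcases zmod2_cases a with rfl | rfl
  · exact absurd h (by decide)
  · rfl

lemma sum_pair_support {s : Finset V} {f : V → ZMod 2} {a b : V} (ha : a ∈ s) (hb : b ∈ s)
    (hab : a ≠ b) (h0 : ∀ c ∈ s, c ≠ a → c ≠ b → f c = 0) :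
    ∑ v ∈ s, f v = f a + f b := by
  classical
  have hsub : ({a, b} : Finset V) ⊆ s := by
    intro c hc
    rcases Finset.mem_insert.1 hc with rfl | hc
    · exact ha
    · rw [Finset.mem_singleton] at hc; subst hc; exact hb
  rw [← Finset.sum_subset hsub (fun x hx hx' =>
    h0 x hx (fun h => hx' (by simp [h])) (fun h => hx' (by simp [h])))]
  exact Finset.sum_pair hab

variable {T : SimpleGraph V} {n : V}

lemma adj_dist_one (hc : T.Connected) {u v : V} (h : T.Adj u v) : T.dist u v = 1 := by
  have h1 : T.dist u v ≤ (Walk.cons h Walk.nil).length := SimpleGraph.dist_le _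
  simp only [Walk.length_cons, Walk.length_nil] at h1
  have h2 := hc.pos_dist_of_ne h.ne
  omega

lemma exists_toward (hc : T.Connected) {a t : V} (hat : a ≠ t) :
    ∃ u, T.Adj a u ∧ T.dist u t + 1 = T.dist a t := by
  obtain ⟨w, hw⟩ := hc.exists_walk_length_eq_dist a t
  cases w with
  | nil => exact absurd rfl hat
  | cons h q =>
    rename_i u
    refine ⟨u, h, ?_⟩
    have h1 : T.dist u t ≤ q.length := SimpleGraph.dist_le q
    have h2 : T.dist a t ≤ T.dist a u + T.dist u t := hc.dist_triangle
    have h3 : T.dist a u = 1 := adj_dist_one hc h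
    simp only [Walk.length_cons] at hw
    omega

lemma toward_unique (hT : T.IsTree) {a t u1 u2 : V} (h1 : T.Adj a u1)
    (hd1 : T.dist u1 t + 1 = T.dist a t) (h2 : T.Adj a u2)
    (hd2 : T.dist u2 t + 1 = T.dist a t) : u1 = u2 := by
  classical
  have hc := hT.isConnected
  have build : ∀ (u : V) (h : T.Adj a u), T.dist u t + 1 = T.dist a t →
      ∃ q : T.Walk u t, (Walk.cons h q).IsPath := by
    intro u h hd
    obtain ⟨w, hw⟩ := hc.exists_walk_length_eq_dist u t
    refine ⟨w.bypass, Walk.IsPath.cons (Walk.bypass_isPath w) ?_⟩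
    intro hmem
    have hh1 : T.dist a t ≤ (w.bypass.dropUntil a hmem).length := SimpleGraph.dist_le _
    have hh2 : (w.bypass.dropUntil a hmem).length ≤ w.bypass.length :=
      Walk.length_dropUntil_le _ hmem
    have hh3 : w.bypass.length ≤ w.length := Walk.length_bypass_le w
    omega
  obtain ⟨q1, hq1⟩ := build u1 h1 hd1
  obtain ⟨q2, hq2⟩ := build u2 h2 hd2
  have hpu := (SimpleGraph.isAcyclic_iff_path_unique.mp hT.IsAcyclic)
    (⟨_, hq1⟩ : T.Path a t) (⟨_, hq2⟩ : T.Path a t)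
  have hval : (Walk.cons h1 q1) = (Walk.cons h2 q2) := congrArg Subtype.val hpu
  have := congrArg (fun w : T.Walk a t => w.getVert 1) hval
  simpa [Walk.getVert_cons_succ, Walk.getVert_zero] using this

lemma mem_P_iff_even (hc : T.Connected) {P : Set V}
    (hbip : ∀ u v, T.Adj u v → (u ∈ P ↔ v ∉ P)) (hn : n ∈ P) (v : V) :
    v ∈ P ↔ Even (T.dist v n) := by
  have key : ∀ k, ∀ v : V, T.dist v n = k → (v ∈ P ↔ Even k) := by
    intro k
    induction k using Nat.strong_induction_on with
    | _ k ih =>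
      intro v hv
      rcases eq_or_ne v n with rfl | hne
      · rw [SimpleGraph.dist_self] at hv
        subst hv
        simp [hn]
      · obtain ⟨u, hadj, hd⟩ := exists_toward hc hne
        rw [hv] at hd
        have hu := ih (T.dist u n) (by omega) u rfl
        rw [hbip v u hadj, ← hd, Nat.even_add_one]
        exact not_congr hu
  exact key _ v rfl

lemma adj_dist_cases (hc : T.Connected) {P : Set V}
    (hbip : ∀ u v, T.Adj u v → (u ∈ P ↔ v ∉ P)) (hn : n ∈ P) {u v : V} (h : T.Adj u v) :
    T.dist v n + 1 = T.dist u n ∨ T.dist u n + 1 = T.dist v n := by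
  have h1 : T.dist u n ≤ T.dist u v + T.dist v n := hc.dist_triangle
  have h2 : T.dist v n ≤ T.dist v u + T.dist u n := hc.dist_triangle
  have h3 : T.dist u v = 1 := adj_dist_one hc h
  have h4 : T.dist v u = 1 := by rw [SimpleGraph.dist_comm]; exact h3
  have h8 : Even (T.dist u n) ↔ ¬ Even (T.dist v n) := by
    rw [← mem_P_iff_even hc hbip hn, ← mem_P_iff_even hc hbip hn]
    exact hbip u v h
  simp only [Nat.even_iff] at h8
  have m1 := Nat.mod_two_eq_zero_or_one (T.dist u n)
  have m2 := Nat.mod_two_eq_zero_or_one (T.dist v n)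
  rcases m1 with m1 | m1 <;> rcases m2 with m2 | m2
  · rw [m1, m2] at h8; simp at h8
  · omega
  · omega
  · rw [m1, m2] at h8; simp at h8

end MDAux

namespace MDAux

variable {V : Type} {T : SimpleGraph V} {n : V}

open Classical in
noncomputable def par (T : SimpleGraph V) (n v : V) : V :=
  if h : ∃ u, T.Adj v u ∧ T.dist u n + 1 = T.dist v n then h.choose else v

lemma par_spec (hc : T.Connected) {v : V} (hv : v ≠ n) :
    T.Adj v (par T n v) ∧ T.dist (par T n v) n + 1 = T.dist v n := by
  have h := exists_toward hc hv
  rw [par, dif_pos h]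
  exact h.choose_spec

lemma par_root : par T n n = n := by
  rw [par, dif_neg]
  rintro ⟨u, -, hd⟩
  rw [SimpleGraph.dist_self] at hd
  omega

lemma par_eq (hT : T.IsTree) {v u : V} (hadj : T.Adj v u)
    (hd : T.dist u n + 1 = T.dist v n) : par T n v = u := by
  have hv : v ≠ n := by
    rintro rfl
    rw [SimpleGraph.dist_self] at hd
    omega
  have hs := par_spec hT.isConnected hv
  exact toward_unique hT hs.1 hs.2 hadj hd

lemma child_ne_root {q v : V} (hch : IsChild T n q v) : v ≠ n := by
  rintro rfl
  have := hch.2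
  rw [SimpleGraph.dist_self] at this
  omega

lemma child_par (hT : T.IsTree) {q v : V} (hch : IsChild T n q v) : par T n v = q :=
  par_eq hT hch.1.symm hch.2.symm

lemma is_child_par (hc : T.Connected) {v : V} (hv : v ≠ n) : IsChild T n (par T n v) v :=
  ⟨(par_spec hc hv).1.symm, ((par_spec hc hv).2).symm⟩

lemma dist_par_lt (hc : T.Connected) {v : V} (hv : v ≠ n) :
    T.dist (par T n v) n < T.dist v n := by
  have := (par_spec hc hv).2; omega

lemma dist_gp_lt (hc : T.Connected) {v : V} (hv : ¬ (v = n)) :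
    T.dist (par T n (par T n v)) n < T.dist v n := by
  by_cases h : par T n v = n
  · rw [h, par_root, SimpleGraph.dist_self]
    exact hc.pos_dist_of_ne hv
  · exact lt_trans (dist_par_lt hc h) (dist_par_lt hc hv)

lemma neighbor_cases (hT : T.IsTree) {P : Set V}
    (hbip : ∀ u v, T.Adj u v → (u ∈ P ↔ v ∉ P)) (hn : n ∈ P) {q u : V}
    (hu : T.Adj q u) : u = par T n q ∨ IsChild T n q u := by
  rcases adj_dist_cases hT.isConnected hbip hn hu with h | h
  · exact Or.inl (par_eq hT hu h).symm
  · exact Or.inr ⟨hu, h.symm⟩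

lemma mem_desc {a b : V} : a ∈ Descendants T n b ↔ T.dist a n = T.dist a b + T.dist b n :=
  Iff.rfl

lemma desc_refl (b : V) : b ∈ Descendants T n b := by
  simp [mem_desc, SimpleGraph.dist_self]

lemma desc_trans (hc : T.Connected) {a b c : V} (h1 : a ∈ Descendants T n b)
    (h2 : b ∈ Descendants T n c) : a ∈ Descendants T n c := by
  rw [mem_desc] at *
  have t1 : T.dist a c ≤ T.dist a b + T.dist b c := hc.dist_triangle
  have t2 : T.dist a n ≤ T.dist a c + T.dist c n := hc.dist_triangle
  omega

lemma desc_antisymm (hc : T.Connected) {a b : V} (h1 : a ∈ Descendants T n b)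
    (h2 : b ∈ Descendants T n a) : a = b := by
  rw [mem_desc] at *
  have hcomm : T.dist a b = T.dist b a := SimpleGraph.dist_comm
  have hz : T.dist a b = 0 := by omega
  exact hc.dist_eq_zero_iff.mp hz

lemma desc_child (hc : T.Connected) {a b w : V} (h : a ∈ Descendants T n b)
    (hch : IsChild T n a w) : w ∈ Descendants T n b := by
  rw [mem_desc] at *
  have t1 : T.dist w b ≤ T.dist w a + T.dist a b := hc.dist_triangle
  have t2 : T.dist w n ≤ T.dist w b + T.dist b n := hc.dist_triangle
  have h3 : T.dist w a = 1 := by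
    rw [SimpleGraph.dist_comm]; exact adj_dist_one hc hch.1
  have h4 := hch.2
  omega

lemma desc_par_lower (hT : T.IsTree) {a b : V} (h : a ∈ Descendants T n b)
    (hab : a ≠ b) : par T n a ∈ Descendants T n b ∧
      T.dist (par T n a) b + 1 = T.dist a b := by
  have hc := hT.isConnected
  rw [mem_desc] at h
  obtain ⟨u, hadj, hub⟩ := exists_toward hc hab
  have t1 : T.dist a n ≤ T.dist a u + T.dist u n := hc.dist_triangle
  have t2 : T.dist u n ≤ T.dist u b + T.dist b n := hc.dist_triangle
  have t3 : T.dist a u = 1 := adj_dist_one hc hadj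
  have hb0 : 0 < T.dist a b := hc.pos_dist_of_ne hab
  have hun : T.dist u n + 1 = T.dist a n := by omega
  have hpar : par T n a = u := par_eq hT hadj hun
  rw [hpar, mem_desc]
  omega

lemma desc_par_upper (hc : T.Connected) {a b : V} (h : a ∈ Descendants T n b)
    (hb : b ≠ n) : a ∈ Descendants T n (par T n b) ∧
      T.dist a (par T n b) = T.dist a b + 1 := by
  have hs := par_spec hc hb
  rw [mem_desc] at h
  have t1 : T.dist a (par T n b) ≤ T.dist a b + T.dist b (par T n b) := hc.dist_triangle
  have t2 : T.dist a n ≤ T.dist a (par T n b) + T.dist (par T n b) n := hc.dist_triangle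
  have t3 : T.dist b (par T n b) = 1 := adj_dist_one hc hs.1
  have t4 := hs.2
  rw [mem_desc]
  omega

lemma desc_toward_child (hT : T.IsTree) {q w : V} (h : w ∈ Descendants T n q)
    (hwq : w ≠ q) : ∃ v, IsChild T n q v ∧ w ∈ Descendants T n v := by
  have hc := hT.isConnected
  rw [mem_desc] at h
  obtain ⟨u, hadj, hd⟩ := exists_toward hc (Ne.symm hwq)
  have t1 : T.dist w n ≤ T.dist w u + T.dist u n := hc.dist_triangle
  have t2 : T.dist u n ≤ T.dist u q + T.dist q n := hc.dist_triangle
  have t3 : T.dist u q = 1 := by rw [SimpleGraph.dist_comm]; exact adj_dist_one hc hadj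
  have t5 : T.dist w u = T.dist u w := SimpleGraph.dist_comm
  have t6 : T.dist w q = T.dist q w := SimpleGraph.dist_comm
  refine ⟨u, ⟨hadj, by omega⟩, ?_⟩
  rw [mem_desc]
  omega

lemma desc_child_unique (hT : T.IsTree) {q v1 v2 w : V} (h1 : IsChild T n q v1)
    (hd1 : w ∈ Descendants T n v1) (h2 : IsChild T n q v2)
    (hd2 : w ∈ Descendants T n v2) : v1 = v2 := by
  have hc := hT.isConnected
  have key : ∀ v, IsChild T n q v → w ∈ Descendants T n v →
      T.dist v w + 1 = T.dist q w := by
    intro v hch hd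
    rw [mem_desc] at hd
    have t1 : T.dist q w ≤ T.dist q v + T.dist v w := hc.dist_triangle
    have t2 : T.dist w n ≤ T.dist w q + T.dist q n := hc.dist_triangle
    have t3 : T.dist q v = 1 := adj_dist_one hc hch.1
    have t4 : T.dist w v = T.dist v w := SimpleGraph.dist_comm
    have t5 : T.dist w q = T.dist q w := SimpleGraph.dist_comm
    have t6 := hch.2
    omega
  exact toward_unique hT h1.1 (key v1 h1 hd1) h2.1 (key v2 h2 hd2)

open Classical in
noncomputable def cc (T : SimpleGraph V) (P : Set V) (n p q : V) : V :=
  if h : ∃ v, IsChild T n q v ∧ p ∈ Descendants T n v then h.choose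
  else if h2 : ∃ v, IsChild T n q v ∧ v ∈ P then h2.choose
  else q

lemma cc_anc (hT : T.IsTree) {P : Set V} {p q : V} (h : p ∈ Descendants T n q)
    (hpq : p ≠ q) : IsChild T n q (cc T P n p q) ∧ p ∈ Descendants T n (cc T P n p q) := by
  have hex := desc_toward_child hT h hpq
  rw [cc, dif_pos hex]
  exact hex.choose_spec

lemma cc_anc_eq (hT : T.IsTree) {P : Set V} {p q v : V} (hch : IsChild T n q v)
    (hv : p ∈ Descendants T n v) (h : p ∈ Descendants T n q) (hpq : p ≠ q) :
    v = cc T P n p q :=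
  desc_child_unique hT hch hv (cc_anc hT h hpq).1 (cc_anc hT h hpq).2

lemma cc_child (hT : T.IsTree) {P : Set V} {p q : V}
    (hbip : ∀ u v, T.Adj u v → (u ∈ P ↔ v ∉ P))
    (hleaf : ∀ q, q ∉ P → ∃ v, IsChild T n q v ∧ v ∈ P) (hq : q ∉ P) :
    IsChild T n q (cc T P n p q) ∧ cc T P n p q ∈ P := by
  rw [cc]
  split_ifs with h1 h2
  · obtain ⟨hch, _⟩ := h1.choose_spec
    have := hbip q _ hch.1
    exact ⟨hch, by tauto⟩
  · exact h2.choose_spec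
  · exact absurd (hleaf q hq) h2

end MDAux

namespace MDAux

variable {V : Type}

open Classical in
noncomputable def xf (T : SimpleGraph V) (hc : T.Connected) (P : Set V) (n p : V)
    (x' : V → ZMod 2) (v : V) : ZMod 2 :=
  if v ∈ Descendants T n p then x' v
  else if hv : v = n then 1
  else if v ∈ P ∧ xf T hc P n p x' (par T n (par T n v)) = 1 ∧ v = cc T P n p (par T n v)
    then 1 else 0
termination_by T.dist v n
decreasing_by
  exact dist_gp_lt hc hv

open Classical in
lemma xf_def (T : SimpleGraph V) (hc : T.Connected) (P : Set V) (n p : V)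
    (x' : V → ZMod 2) (v : V) :
    xf T hc P n p x' v =
      if v ∈ Descendants T n p then x' v
      else if v = n then 1
      else if v ∈ P ∧ xf T hc P n p x' (par T n (par T n v)) = 1 ∧ v = cc T P n p (par T n v)
        then 1 else 0 := by
  rw [xf]
  simp only [dite_eq_ite]

variable {T : SimpleGraph V} {n : V} {P : Set V} {p : V} {x' : V → ZMod 2} {hc : T.Connected}

lemma xf_desc {v : V} (hd : v ∈ Descendants T n p) : xf T hc P n p x' v = x' v := by
  rw [xf_def, if_pos hd]

lemma xf_one_iff {v : V} (hd : v ∉ Descendants T n p) (hv : v ≠ n) :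
    xf T hc P n p x' v = 1 ↔
      v ∈ P ∧ xf T hc P n p x' (par T n (par T n v)) = 1 ∧ v = cc T P n p (par T n v) := by
  rw [xf_def, if_neg hd, if_neg hv]
  split_ifs with h
  · exact iff_of_true rfl h
  · exact iff_of_false (by decide) h

lemma xf_root (hx'p : x' p = 1) : xf T hc P n p x' n = 1 := by
  rw [xf_def]
  split_ifs with h1 h2 h3
  · rw [mem_desc, SimpleGraph.dist_self] at h1
    have h2 : T.dist n p = 0 := by omega
    have : n = p := hc.dist_eq_zero_iff.mp h2
    rw [this, hx'p]
  · rfl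
  · exact absurd rfl h2
  · exact absurd rfl h2

lemma xf_zero_notP (hx1 : ∀ v, ¬(v ∈ P ∧ v ∈ Descendants T n p) → x' v = 0)
    (hn : n ∈ P) {v : V} (hv : v ∉ P) : xf T hc P n p x' v = 0 := by
  rw [xf_def]
  split_ifs with h1 h2 h3
  · exact hx1 v (fun hh => hv hh.1)
  · exact absurd (h2 ▸ hn) hv
  · exact absurd h3.1 hv
  · rfl

end MDAux

namespace MDAux

variable {V : Type} {T : SimpleGraph V} {n : V} {P : Set V} {p : V} {x' : V → ZMod 2}
  {hc : T.Connected}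

lemma anc_one (hT : T.IsTree)
    (hbip : ∀ u v, T.Adj u v → (u ∈ P ↔ v ∉ P)) (hn : n ∈ P) (hp : p ∈ P)
    (hx'p : x' p = 1) :
    ∀ u, u ∈ P → p ∈ Descendants T n u → xf T hc P n p x' u = 1 := by
  have key : ∀ k u, T.dist u n = k → u ∈ P → p ∈ Descendants T n u →
      xf T hc P n p x' u = 1 := by
    intro k
    induction k using Nat.strong_induction_on with
    | _ k ih =>
      intro u hk hu hpu
      by_cases hdesc : u ∈ Descendants T n p
      · have hup : u = p := desc_antisymm hc hdesc hpu
        rw [xf_desc hdesc, hup, hx'p]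
      · rcases eq_or_ne u n with rfl | hune
        · exact xf_root hx'p
        · have hq := par_spec hc hune
          have hqP : par T n u ∉ P := fun hqP' => ((hbip u _ hq.1).mp hu) hqP'
          have hdq := desc_par_upper hc hpu hune
          have hqn : par T n u ≠ n := fun h => hqP (by rw [h]; exact hn)
          have hchu : IsChild T n (par T n u) u := is_child_par hc hune
          have hpq : p ≠ par T n u := fun h => hqP (by rw [← h]; exact hp)
          have hucc : u = cc T P n p (par T n u) := cc_anc_eq hT hchu hpu hdq.1 hpq
          have hdq2 := desc_par_upper hc hdq.1 hqn
          have hgpP : par T n (par T n u) ∈ P := by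
            have := hbip _ _ (par_spec hc hqn).1
            tauto
          have hgp1 : xf T hc P n p x' (par T n (par T n u)) = 1 := by
            refine ih (T.dist (par T n (par T n u)) n) ?_ _ rfl hgpP hdq2.1
            rw [← hk]
            exact dist_gp_lt hc hune
          rw [xf_one_iff hdesc hune]
          exact ⟨hu, hgp1, hucc⟩
  exact fun u => key (T.dist u n) u rfl

lemma children_support (hT : T.IsTree)
    (hbip : ∀ u v, T.Adj u v → (u ∈ P ↔ v ∉ P)) (hn : n ∈ P) (hp : p ∈ P)
    (hx'p : x' p = 1) {q w : V} (hq : q ∉ P)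
    (hqd : q ∉ Descendants T n p) (hch : IsChild T n q w)
    (hw : xf T hc P n p x' w = 1) :
    w = cc T P n p q ∧ xf T hc P n p x' (par T n q) = 1 := by
  by_cases hwd : w ∈ Descendants T n p
  · have hwp : w = p := by
      rcases eq_or_ne w p with h | h
      · exact h
      · exfalso
        have hh := (desc_par_lower hT hwd h).1
        rw [child_par hT hch] at hh
        exact hqd hh
    have h2 : T.dist w q = 1 := by
      rw [SimpleGraph.dist_comm]; exact adj_dist_one hc hch.1
    have hdpq : p ∈ Descendants T n q := by
      rw [← hwp, mem_desc]
      have h1 := hch.2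
      omega
    have hpq : p ≠ q := fun h => hq (by rw [← h]; exact hp)
    have hqn : q ≠ n := fun h => hq (by rw [h]; exact hn)
    have hgpP : par T n q ∈ P := by
      have := hbip _ _ (par_spec hc hqn).1
      tauto
    exact ⟨cc_anc_eq hT hch (by rw [hwp]; exact desc_refl p) hdpq hpq,
      anc_one hT hbip hn hp hx'p _ hgpP (desc_par_upper hc hdpq hqn).1⟩
  · have hwn : w ≠ n := child_ne_root hch
    rw [xf_one_iff hwd hwn, child_par hT hch] at hw
    exact ⟨hw.2.2, hw.2.1⟩

lemma xf_codeword [Fintype V] [DecidableRel T.Adj] (hT : T.IsTree)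
    (hbip : ∀ u v, T.Adj u v → (u ∈ P ↔ v ∉ P)) (hn : n ∈ P)
    (hleaf : ∀ q, q ∉ P → ∃ v, IsChild T n q v ∧ v ∈ P) (hp : p ∈ P)
    (hx1 : ∀ v, ¬(v ∈ P ∧ v ∈ Descendants T n p) → x' v = 0)
    (hx2 : ∀ q ∈ Descendants T n p, q ∉ P → ∑ u ∈ T.neighborFinset q, x' u = 0)
    (hx'p : x' p = 1) :
    IsCodewordOn T P Set.univ (xf T hc P n p x') := by
  constructor
  · intro v hv
    exact xf_zero_notP hx1 hn (fun hvP => hv ⟨hvP, Set.mem_univ v⟩)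
  · intro q _ hq
    have hqn : q ≠ n := fun h => hq (by rw [h]; exact hn)
    by_cases hqd : q ∈ Descendants T n p
    · have heq : ∀ w ∈ T.neighborFinset q, xf T hc P n p x' w = x' w := by
        intro w hw
        rw [SimpleGraph.mem_neighborFinset] at hw
        rcases neighbor_cases hT hbip hn hw with h | hch
        · subst h
          have hqp : q ≠ p := fun h => hq (by rw [h]; exact hp)
          exact xf_desc (desc_par_lower hT hqd hqp).1
        · exact xf_desc (desc_child hc hqd hch)
      rw [Finset.sum_congr rfl heq]
      exact hx2 q hqd hq
    · have hparq := par_spec hc hqn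
      have hcc := cc_child (p := p) hT hbip hleaf hq
      have hmempar : par T n q ∈ T.neighborFinset q := by
        rw [SimpleGraph.mem_neighborFinset]; exact hparq.1
      have hmemcc : cc T P n p q ∈ T.neighborFinset q := by
        rw [SimpleGraph.mem_neighborFinset]; exact hcc.1.1
      have hne : par T n q ≠ cc T P n p q := by
        intro h
        have h1 := hparq.2
        have h2 := hcc.1.2
        rw [h] at h1
        omega
      by_cases hpar1 : xf T hc P n p x' (par T n q) = 1
      · have hcc1 : xf T hc P n p x' (cc T P n p q) = 1 := by
          by_cases hccdesc : cc T P n p q ∈ Descendants T n p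
          · have hccp : cc T P n p q = p := by
              rcases eq_or_ne (cc T P n p q) p with h | h
              · exact h
              · exfalso
                have hh := (desc_par_lower hT hccdesc h).1
                rw [child_par hT hcc.1] at hh
                exact hqd hh
            rw [hccp, xf_desc (desc_refl p)]
            exact hx'p
          · rw [xf_one_iff hccdesc (child_ne_root hcc.1)]
            exact ⟨hcc.2, by rw [child_par hT hcc.1]; exact hpar1, by rw [child_par hT hcc.1]⟩
        rw [sum_pair_support hmempar hmemcc hne ?_, hpar1, hcc1]
        · decide
        · intro w hw hw1 hw2
          rw [SimpleGraph.mem_neighborFinset] at hw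
          rcases neighbor_cases hT hbip hn hw with h | hch
          · exact absurd h hw1
          · rcases zmod2_cases (xf T hc P n p x' w) with h | h
            · exact h
            · exact absurd (children_support hT hbip hn hp hx'p hq hqd hch h).1 hw2
      · apply Finset.sum_eq_zero
        intro w hw
        rw [SimpleGraph.mem_neighborFinset] at hw
        rcases zmod2_cases (xf T hc P n p x' w) with h | h
        · exact h
        · exfalso
          rcases neighbor_cases hT hbip hn hw with heq | hch
          · rw [heq] at h
            exact hpar1 h
          · exact hpar1 (children_support hT hbip hn hp hx'p hq hqd hch h).2

end MDAux

namespace MDAux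

variable {V : Type} {T : SimpleGraph V} {n : V} {P : Set V} {p : V} {x' : V → ZMod 2}
  {hc : T.Connected}

lemma xf_minimal [Fintype V] [DecidableRel T.Adj] (hT : T.IsTree)
    (hbip : ∀ u v, T.Adj u v → (u ∈ P ↔ v ∉ P)) (hn : n ∈ P) (hp : p ∈ P)
    (hx1 : ∀ v, ¬(v ∈ P ∧ v ∈ Descendants T n p) → x' v = 0)
    (hx'p : x' p = 1)
    (hmin : ∀ y, IsCodewordOn T P (Descendants T n p) y →
      CoversOn P (Descendants T n p) x' y → y ≠ 0 → y = x')
    (y : V → ZMod 2) (hy : IsCodewordOn T P Set.univ y)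
    (hcov : CoversOn P Set.univ (xf T hc P n p x') y) (hy0 : y ≠ 0) :
    y = xf T hc P n p x' := by
  classical
  -- if xf vanishes, so does y
  have hyle : ∀ v, xf T hc P n p x' v = 0 → y v = 0 := by
    intro v hv
    by_cases hvP : v ∈ P
    · rcases zmod2_cases (y v) with h | h
      · exact h
      · rw [hcov v hvP (Set.mem_univ v) h] at hv
        exact absurd hv (by decide)
    · exact hy.1 v (fun h => hvP h.1)
  -- the restriction of y to the subtree
  set y1 : V → ZMod 2 := fun v => if v ∈ Descendants T n p then y v else 0 with hy1def
  have hy1cw : IsCodewordOn T P (Descendants T n p) y1 := by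
    constructor
    · intro v hv
      by_cases hd : v ∈ Descendants T n p
      · have hvP : v ∉ P := fun h => hv ⟨h, hd⟩
        simp only [hy1def, if_pos hd]
        exact hy.1 v (fun h => hvP h.1)
      · simp [hy1def, hd]
    · intro q hqd hq
      have hqn : q ≠ n := fun h => hq (by rw [h]; exact hn)
      have hqp : q ≠ p := fun h => hq (by rw [h]; exact hp)
      have heq : ∀ w ∈ T.neighborFinset q, y1 w = y w := by
        intro w hw
        rw [SimpleGraph.mem_neighborFinset] at hw
        have hwd : w ∈ Descendants T n p := by
          rcases neighbor_cases hT hbip hn hw with h | hch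
          · subst h
            exact (desc_par_lower hT hqd hqp).1
          · exact desc_child hc hqd hch
        simp only [hy1def, if_pos hwd]
      rw [Finset.sum_congr rfl heq]
      exact hy.2 q (Set.mem_univ q) hq
  have hy1cov : CoversOn P (Descendants T n p) x' y1 := by
    intro v hvP hvd hv1
    have h1 : y v = 1 := by simpa only [hy1def, if_pos hvd] using hv1
    have h2 := hcov v hvP (Set.mem_univ v) h1
    rwa [xf_desc hvd] at h2
  -- parity extraction at a check outside the subtree
  have hpairsum : ∀ q v : V, q ∉ P → q ∉ Descendants T n p → IsChild T n q v →
      v = cc T P n p q → y (par T n q) + y v = 0 := by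
    intro q v hqP hqd hch hvcc
    have hqn : q ≠ n := fun h => hqP (by rw [h]; exact hn)
    have hsum := hy.2 q (Set.mem_univ q) hqP
    have hmem1 : par T n q ∈ T.neighborFinset q := by
      rw [SimpleGraph.mem_neighborFinset]; exact (par_spec hc hqn).1
    have hmem2 : v ∈ T.neighborFinset q := by
      rw [SimpleGraph.mem_neighborFinset]; exact hch.1
    have hne : par T n q ≠ v := by
      intro h
      have h1 := (par_spec hc hqn).2
      have h2 := hch.2
      rw [h] at h1
      omega
    rw [sum_pair_support hmem1 hmem2 hne ?_] at hsum
    · exact hsum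
    · intro w hw hw1 hw2
      rw [SimpleGraph.mem_neighborFinset] at hw
      rcases neighbor_cases hT hbip hn hw with h | hch2
      · exact absurd h hw1
      · apply hyle
        rcases zmod2_cases (xf T hc P n p x' w) with h | h
        · exact h
        · exact absurd ((children_support hT hbip hn hp hx'p hqP hqd hch2 h).1.trans
            hvcc.symm) hw2
  -- walking up to the root, outside the subtree
  have hup : ∀ k v, T.dist v n = k → v ∉ Descendants T n p → v ∈ P → y v = 1 →
      y n = 1 := by
    intro k
    induction k using Nat.strong_induction_on with
    | _ k ih =>
      intro v hk hvd hvP hyv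
      rcases eq_or_ne v n with rfl | hvn
      · exact hyv
      · have hxv : xf T hc P n p x' v = 1 := hcov v hvP (Set.mem_univ v) hyv
        rw [xf_one_iff hvd hvn] at hxv
        obtain ⟨-, hgp1, hvcc⟩ := hxv
        have hq := par_spec hc hvn
        have hqP : par T n v ∉ P := fun h => ((hbip v _ hq.1).mp hvP) h
        have hqn : par T n v ≠ n := fun h => hqP (by rw [h]; exact hn)
        have hqd : par T n v ∉ Descendants T n p :=
          fun h => hvd (desc_child hc h (is_child_par hc hvn))
        have huP : par T n (par T n v) ∈ P := by
          have := hbip _ _ (par_spec hc hqn).1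
          tauto
        have hud : par T n (par T n v) ∉ Descendants T n p :=
          fun h => hqd (desc_child hc h (is_child_par hc hqn))
        have hsum := hpairsum (par T n v) v hqP hqd (is_child_par hc hvn) hvcc
        have hyu : y (par T n (par T n v)) = 1 := zmod2_add_eq _ _ hsum hyv
        exact ih (T.dist (par T n (par T n v)) n)
          (by rw [← hk]; exact dist_gp_lt hc hvn) _ rfl hud huP hyu
  -- from p up to the root
  have hupp : y p = 1 → y n = 1 := by
    intro hyp1
    rcases eq_or_ne p n with rfl | hpn
    · exact hyp1
    · have hq := par_spec hc hpn
      have hqP : par T n p ∉ P := fun h => ((hbip p _ hq.1).mp hp) h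
      have hqn : par T n p ≠ n := fun h => hqP (by rw [h]; exact hn)
      have hqd : par T n p ∉ Descendants T n p := by
        intro h
        rw [mem_desc] at h
        have := hq.2
        omega
      have hdpq : p ∈ Descendants T n (par T n p) := by
        rw [mem_desc]
        have h2 : T.dist p (par T n p) = 1 := adj_dist_one hc hq.1
        have := hq.2
        omega
      have hccp : p = cc T P n p (par T n p) :=
        cc_anc_eq hT (is_child_par hc hpn) (desc_refl p) hdpq
          (fun h => hqP (by rw [← h]; exact hp))
      have huP : par T n (par T n p) ∈ P := by
        have := hbip _ _ (par_spec hc hqn).1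
        tauto
      have hud : par T n (par T n p) ∉ Descendants T n p :=
        fun h => hqd (desc_child hc h (is_child_par hc hqn))
      have hsum := hpairsum (par T n p) p hqP hqd (is_child_par hc hpn) hccp
      have hyu : y (par T n (par T n p)) = 1 := zmod2_add_eq _ _ hsum hyp1
      exact hup _ _ rfl hud huP hyu
  -- walking down from the root to p
  have hdown : ∀ k u, T.dist p u = k → u ∈ P → p ∈ Descendants T n u → y u = 1 →
      y p = 1 := by
    intro k
    induction k using Nat.strong_induction_on with
    | _ k ih =>
      intro u hk huP hpu hyu
      rcases eq_or_ne p u with rfl | hpu2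
      · exact hyu
      · obtain ⟨q, hchq, hpdq⟩ := desc_toward_child hT hpu hpu2
        have hqP : q ∉ P := fun h => ((hbip u q hchq.1).mp huP) h
        have hqp : p ≠ q := fun h => hqP (by rw [← h]; exact hp)
        have hqd : q ∉ Descendants T n p := fun h => hqp (desc_antisymm hc hpdq h)
        have hccq := cc_anc (P := P) hT hpdq hqp
        have hparu : par T n q = u := child_par hT hchq
        have hsum := hpairsum q (cc T P n p q) hqP hqd hccq.1 rfl
        rw [hparu] at hsum
        have hycc : y (cc T P n p q) = 1 :=
          zmod2_add_eq _ _ (by rw [add_comm] at hsum; exact hsum) hyu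
        have hccP : cc T P n p q ∈ P := by
          have := hbip q _ hccq.1.1
          tauto
        have e1 : T.dist p n = T.dist p u + T.dist u n := hpu
        have e2 : T.dist p n = T.dist p q + T.dist q n := hpdq
        have e3 : T.dist q n = T.dist u n + 1 := hchq.2
        have e4 : T.dist p n = T.dist p (cc T P n p q) + T.dist (cc T P n p q) n :=
          hccq.2
        have e5 : T.dist (cc T P n p q) n = T.dist q n + 1 := hccq.1.2
        exact ih (T.dist p (cc T P n p q)) (by omega) _ rfl hccP hccq.2 hycc
  -- walking down outside the subtree: y agrees with xf on its support
  have hdfull : y n = 1 → ∀ k v, T.dist v n = k → v ∉ Descendants T n p →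
      xf T hc P n p x' v = 1 → y v = 1 := by
    intro hyn k
    induction k using Nat.strong_induction_on with
    | _ k ih =>
      intro v hk hvd hxv
      rcases eq_or_ne v n with rfl | hvn
      · exact hyn
      · rw [xf_one_iff hvd hvn] at hxv
        obtain ⟨hvP, hgp1, hvcc⟩ := hxv
        have hq := par_spec hc hvn
        have hqP : par T n v ∉ P := fun h => ((hbip v _ hq.1).mp hvP) h
        have hqn : par T n v ≠ n := fun h => hqP (by rw [h]; exact hn)
        have hqd : par T n v ∉ Descendants T n p :=
          fun h => hvd (desc_child hc h (is_child_par hc hvn))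
        have hud : par T n (par T n v) ∉ Descendants T n p :=
          fun h => hqd (desc_child hc h (is_child_par hc hqn))
        have hyu : y (par T n (par T n v)) = 1 :=
          ih (T.dist (par T n (par T n v)) n)
            (by rw [← hk]; exact dist_gp_lt hc hvn) _ rfl hud hgp1
        have hsum := hpairsum (par T n v) v hqP hqd (is_child_par hc hvn) hvcc
        exact zmod2_add_eq _ _ (by rw [add_comm] at hsum; exact hsum) hyu
  -- assemble
  obtain ⟨v0, hv0⟩ := Function.ne_iff.mp hy0
  rw [Pi.zero_apply] at hv0
  have hv0P : v0 ∈ P := by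
    by_contra h
    exact hv0 (hy.1 v0 (fun hh => h hh.1))
  have hyv0 : y v0 = 1 := by
    rcases zmod2_cases (y v0) with h | h
    · exact absurd h hv0
    · exact h
  have hyn : y n = 1 := by
    by_cases h : v0 ∈ Descendants T n p
    · have h1 : y1 ≠ 0 := by
        intro hzero
        have hz := congrFun hzero v0
        rw [Pi.zero_apply] at hz
        simp only [hy1def, if_pos h] at hz
        exact hv0 hz
      have h2 : y1 = x' := hmin y1 hy1cw hy1cov h1
      have h3 : y p = 1 := by
        have hz := congrFun h2 p
        simp only [hy1def, if_pos (desc_refl p)] at hz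
        rw [hz, hx'p]
      exact hupp h3
    · exact hup _ v0 rfl h hv0P hyv0
  have hyp1 : y p = 1 := by
    refine hdown _ n rfl hn ?_ hyn
    rw [mem_desc, SimpleGraph.dist_self]
    omega
  have hy1x : y1 = x' := by
    refine hmin y1 hy1cw hy1cov ?_
    intro hzero
    have hz := congrFun hzero p
    rw [Pi.zero_apply] at hz
    simp only [hy1def, if_pos (desc_refl p)] at hz
    rw [hyp1] at hz
    exact absurd hz (by decide)
  funext v
  by_cases hvd : v ∈ Descendants T n p
  · have hz := congrFun hy1x v
    simp only [hy1def, if_pos hvd] at hz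
    rw [hz, xf_desc hvd]
  · rcases zmod2_cases (xf T hc P n p x' v) with h | h
    · rw [h]
      exact hyle v h
    · rw [h]
      exact hdfull hyn _ v rfl hvd h

end MDAux


/-- assume every leaf of `T` is a variable node (equivalently, every
check node of `T` has at least one child variable node).  Let `p` be a variable node
and `T_p` the subtree consisting of `p` and all of its descendants, rooted at `p`.
Then every minimal deviation `x'` of `T_p` extends to a minimal deviation `x` of `T`,
i.e. `x` agrees with `x'` on every variable node of `T_p`. -/
theorem minimal_deviation_of_subtree_extends {V : Type} [Fintype V]
    (T : SimpleGraph V) [DecidableRel T.Adj] (hT : T.IsTree)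
    (P : Set V) (hbip : ∀ u v, T.Adj u v → (u ∈ P ↔ v ∉ P))
    (n : V) (hn : n ∈ P)
    (hleaf : ∀ q, q ∉ P → ∃ v, IsChild T n q v ∧ v ∈ P)
    (p : V) (hp : p ∈ P)
    (x' : V → ZMod 2)
    (hx' : IsMinimalDeviationOn T P (Descendants T n p) p x') :
    ∃ x, IsMinimalDeviationOn T P Set.univ n x ∧
      ∀ v ∈ P, v ∈ Descendants T n p → x v = x' v := by
  classical
  obtain ⟨⟨hx1, hx2⟩, hx'p, hmin⟩ := hx'
  exact ⟨MDAux.xf T hT.isConnected P n p x',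
    ⟨MDAux.xf_codeword hT hbip hn hleaf hp hx1 hx2 hx'p, MDAux.xf_root hx'p,
      fun y hy hcov hy0 => MDAux.xf_minimal hT hbip hn hp hx1 hx'p hmin y hy hcov hy0⟩,
    fun v _ hvd => MDAux.xf_desc hvd⟩
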